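/- Let p + qi ∈ ℤ[i] be a Gaussian integer and for each s ≥ 1 write p_s + q_s i = (p + qi)^s. If gcd(p_2, q_2) = 1, then gcd(p_s, q_s) = 1 for all positive integers s. -/

import Mathlib

lemma aux_dvd_sq (z : GaussianInt) (p : ℕ) (hp : p.Prime) (s : ℕ)
    (hdvd : ((p : ℤ) : GaussianInt) ∣ z ^ s) : ((p : ℤ) : GaussianInt) ∣ z ^ 2 := by
  have hnormp : Zsqrtd.norm ((p : ℤ) : GaussianInt) = (p : ℤ) ^ 2 := by
    simp [Zsqrtd.norm_intCast, sq]
  have hpu : ¬ IsUnit ((p : ℤ) : GaussianInt) := by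
    rw [← Zsqrtd.norm_eq_one_iff, hnormp]
    simp [Int.natAbs_pow]
    intro hc
    have := hp.two_le
    nlinarith [Nat.le_of_eq hc]
  have hpz : ((p : ℤ) : GaussianInt) ≠ 0 := by
    simp [Int.cast_ne_zero]
    exact_mod_cast hp.pos.ne'
  obtain ⟨π, hπ, hπp⟩ := WfDvdMonoid.exists_irreducible_factor hpu hpz
  have hπprime : Prime π := hπ.prime
  have hπz : π ∣ z := hπprime.dvd_of_dvd_pow (hπp.trans hdvd)
  have hstarprime : Prime (star π) :=
    (MulEquiv.prime_iff (p := π) (starRingAut (R := GaussianInt)).toMulEquiv).mpr hπprime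
  have hstarp : star π ∣ ((p : ℤ) : GaussianInt) := by
    have := map_dvd (starRingEnd GaussianInt) hπp
    simpa [starRingEnd_apply] using this
  have hstarz : star π ∣ z := hstarprime.dvd_of_dvd_pow (hstarp.trans hdvd)
  have hnorm : ((Zsqrtd.norm π : ℤ) : GaussianInt) ∣ z ^ 2 := by
    rw [Zsqrtd.norm_eq_mul_conj, sq]
    exact mul_dvd_mul hπz hstarz
  have hnp : (p : ℤ) ∣ Zsqrtd.norm π := by
    obtain ⟨c, hc⟩ := hπp
    have h1 : Zsqrtd.norm π ∣ (p : ℤ) ^ 2 := by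
      rw [← hnormp, hc, Zsqrtd.norm_mul]; exact Dvd.intro _ rfl
    have hne1 : (Zsqrtd.norm π).natAbs ≠ 1 := fun hc' =>
      hπprime.not_unit (Zsqrtd.norm_eq_one_iff.mp hc')
    obtain ⟨q, hq, hqd⟩ := Int.exists_prime_and_dvd hne1
    have hpInt : Prime (p : ℤ) := by
      rw [Int.prime_iff_natAbs_prime]; simpa using hp
    have hqp : q ∣ (p : ℤ) := hq.dvd_of_dvd_pow (hqd.trans h1)
    exact ((hq.associated_of_dvd hpInt hqp).symm.dvd).trans hqd
  exact (map_dvd (Int.castRingHom GaussianInt) hnp).trans hnorm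

theorem stmt_6 (z : GaussianInt)
    (h : Int.gcd (z ^ 2).re (z ^ 2).im = 1) :
    ∀ s : ℕ, 0 < s → Int.gcd (z ^ s).re (z ^ s).im = 1 := by
  intro s hs
  by_contra hg
  obtain ⟨p, hp, hpd⟩ := Nat.exists_prime_and_dvd hg
  have hdvd : ((p : ℤ) : GaussianInt) ∣ z ^ s := by
    rw [Zsqrtd.intCast_dvd]
    exact ⟨Int.natCast_dvd.mpr (hpd.trans (Nat.gcd_dvd_left _ _)),
      Int.natCast_dvd.mpr (hpd.trans (Nat.gcd_dvd_right _ _))⟩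
  have h2 := aux_dvd_sq z p hp s hdvd
  rw [Zsqrtd.intCast_dvd] at h2
  have : p ∣ Int.gcd (z ^ 2).re (z ^ 2).im :=
    Nat.dvd_gcd (Int.natCast_dvd.mp h2.1) (Int.natCast_dvd.mp h2.2)
  rw [h] at this
  exact hp.one_lt.ne' (Nat.dvd_one.mp this)
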